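/- Let s be a composition of positive integers. The h-polynomial of the combinatorial s-permutahedron equals the s-order Eulerian polynomial A_s(x) = ∑_k |W_s(k)| x^k, where W_s(k) is the set of Stirling s-permutations with exactly k descents. Equivalently, ∑_{w} (1+x)^{asc(w)} = A_s(x+1), where asc(w) is the number of ascents of w and the sum is over all Stirling s-permutations w. -/

import Mathlib

namespace SPermutahedron

/-! ### Stirling `s`-permutations -/

/-- A word avoids the pattern `121`: there is never a letter `j` strictly in
between two occurrences of a letter `i` with `i < j`. -/
def Avoids121 (w : List ℕ) : Prop :=
  ¬ ∃ (u₁ u₂ u₃ u₄ : List ℕ) (i j : ℕ), i < j ∧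
      w = u₁ ++ i :: u₂ ++ j :: u₃ ++ i :: u₄

/-- A Stirling `s`-permutation: a permutation of the word `1^{s 1} 2^{s 2} ⋯ n^{s n}`
avoiding the pattern `121`. -/
def IsStirling (s : ℕ → ℕ) (n : ℕ) (w : List ℕ) : Prop :=
  (∀ x ∈ w, 1 ≤ x ∧ x ≤ n) ∧ (∀ i, 1 ≤ i → i ≤ n → w.count i = s i) ∧ Avoids121 w

/-- `(a, c)` is an ascent of `w`: `a < c` and `ac` is a consecutive substring. -/
def WordAscent (w : List ℕ) (a c : ℕ) : Prop :=
  a < c ∧ ∃ u v, w = u ++ a :: c :: v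

/-- `(a, c)` is a descent of `w`: `a < c` and `ca` is a consecutive substring. -/
def WordDescent (w : List ℕ) (a c : ℕ) : Prop :=
  a < c ∧ ∃ u v, w = u ++ c :: a :: v

/-- The inversion multiplicity `#_w(c, a)`: the number of occurrences of `c`
preceding the `a`-block of `w` (i.e. preceding the first occurrence of `a`). -/
def invW (w : List ℕ) (c a : ℕ) : ℕ := (w.takeWhile (fun x => decide (x ≠ a))).count c

open Classical in
/-- The (finite) set of all Stirling `s`-permutations: the `121`-avoiding
permutations of the word `1^{s 1} 2^{s 2} ⋯ n^{s n}`. -/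
noncomputable def StirlingFinset (s : ℕ → ℕ) (n : ℕ) : Finset (List ℕ) :=
  (((List.range n).flatMap fun i => List.replicate (s (i + 1)) (i + 1)).permutations).toFinset.filter
    fun w => Avoids121 w

open Classical in
/-- The set of ascents of `w`: pairs `(a, c)` with `a < c` and `ac` a
consecutive substring of `w`. -/
noncomputable def AscFinset (n : ℕ) (w : List ℕ) : Finset (ℕ × ℕ) :=
  (Finset.Icc 1 n ×ˢ Finset.Icc 1 n).filter fun p => WordAscent w p.1 p.2

open Classical in
/-- The set of descents of `w`: pairs `(a, c)` with `a < c` and `ca` a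
consecutive substring of `w`. -/
noncomputable def DescFinset (n : ℕ) (w : List ℕ) : Finset (ℕ × ℕ) :=
  (Finset.Icc 1 n ×ˢ Finset.Icc 1 n).filter fun p => WordDescent w p.1 p.2

open Polynomial in
/-- The `s`-order Eulerian polynomial `A_s(x) = ∑_k |W_s(k)| x^k`, where
`W_s(k)` is the set of Stirling `s`-permutations with exactly `k` descents. -/
noncomputable def sEulerianPoly (s : ℕ → ℕ) (n : ℕ) : Polynomial ℤ :=
  ∑ k ∈ Finset.range ((∑ i ∈ Finset.Icc 1 n, s i) + 1),
    Polynomial.C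
      ((((StirlingFinset s n).filter fun w => (DescFinset n w).card = k).card : ℤ)) * X ^ k

/-! ### Auxiliary lemmas -/

lemma avoids121_reverse {w : List ℕ} (h : Avoids121 w) : Avoids121 w.reverse := by
  rintro ⟨u₁, u₂, u₃, u₄, i, j, hij, hw⟩
  apply h
  refine ⟨u₄.reverse, u₃.reverse, u₂.reverse, u₁.reverse, i, j, hij, ?_⟩
  rw [← List.reverse_reverse w, hw]
  simp

lemma wordDescent_reverse {w : List ℕ} {a c : ℕ} (h : WordAscent w a c) :
    WordDescent w.reverse a c := by
  obtain ⟨hac, u, v, rfl⟩ := h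
  exact ⟨hac, v.reverse, u.reverse, by simp⟩

lemma wordAscent_reverse {w : List ℕ} {a c : ℕ} (h : WordDescent w a c) :
    WordAscent w.reverse a c := by
  obtain ⟨hac, u, v, rfl⟩ := h
  exact ⟨hac, v.reverse, u.reverse, by simp⟩

lemma mem_stirling_reverse {s : ℕ → ℕ} {n : ℕ} {w : List ℕ}
    (h : w ∈ StirlingFinset s n) : w.reverse ∈ StirlingFinset s n := by
  classical
  simp only [StirlingFinset, Finset.mem_filter, List.mem_toFinset,
    List.mem_permutations] at h ⊢
  exact ⟨(w.reverse_perm).trans h.1, avoids121_reverse h.2⟩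

lemma descFinset_reverse (n : ℕ) (w : List ℕ) :
    DescFinset n w.reverse = AscFinset n w := by
  classical
  unfold DescFinset AscFinset
  apply Finset.filter_congr
  intro p _
  constructor
  · intro h
    have := wordAscent_reverse h
    rwa [List.reverse_reverse] at this
  · exact wordDescent_reverse

/-- Descent-set cardinality is bounded by the length of the word. -/
lemma descFinset_card_le (n : ℕ) (w : List ℕ) : (DescFinset n w).card ≤ w.length := by
  classical
  have hsub : DescFinset n w ⊆ (Finset.range w.length).image
      (fun k => ((w.drop k).getD 1 0, (w.drop k).getD 0 0)) := by
    intro p hp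
    simp only [DescFinset, Finset.mem_filter] at hp
    obtain ⟨-, hac, u, v, hw⟩ := hp
    refine Finset.mem_image.2 ⟨u.length, ?_, ?_⟩
    · rw [Finset.mem_range, hw]
      simp
    · rw [hw, List.drop_left]
      rfl
  calc (DescFinset n w).card ≤ _ := Finset.card_le_card hsub
    _ ≤ (Finset.range w.length).card := Finset.card_image_le
    _ = w.length := Finset.card_range _

lemma stirling_length {s : ℕ → ℕ} {n : ℕ} {w : List ℕ}
    (h : w ∈ StirlingFinset s n) : w.length = ∑ i ∈ Finset.Icc 1 n, s i := by
  classical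
  simp only [StirlingFinset, Finset.mem_filter, List.mem_toFinset,
    List.mem_permutations] at h
  have hlen := h.1.length_eq
  rw [hlen]
  rw [List.length_flatMap]
  have : ∑ i ∈ Finset.Icc 1 n, s i = ∑ i ∈ Finset.range n, s (i + 1) := by
    rw [← Finset.Ico_add_one_right_eq_Icc, Finset.sum_Ico_eq_sum_range]
    simp [Nat.add_comm]
  rw [this]
  clear h hlen this
  induction n with
  | zero => simp
  | succ m ih => simp at ih; simp [List.range_succ, Finset.sum_range_succ, ih]

lemma sum_powerset_pow (t : Finset (ℕ × ℕ)) :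
    ∑ A ∈ t.powerset, (Polynomial.X : Polynomial ℤ) ^ A.card
      = ((1 : Polynomial ℤ) + Polynomial.X) ^ t.card := by
  classical
  have h := Finset.prod_add (fun _ : ℕ × ℕ => (Polynomial.X : Polynomial ℤ))
    (fun _ => (1 : Polynomial ℤ)) t
  simp only [Finset.prod_const, one_pow, mul_one] at h
  rw [add_comm (1 : Polynomial ℤ) Polynomial.X, ← h]

open Polynomial in
/-- The `h`-polynomial of the combinatorial
`s`-permutahedron is the `s`-order Eulerian polynomial `A_s`.  The
`f`-polynomial is `f(x) = ∑_{(w,A)} x^{|A|}`, the sum running over faces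
`(w, A)` (a Stirling `s`-permutation with a subset of its ascents), so the
defining relation `f(x) = h(x+1)` reads `f = A_s ∘ (X+1)`; equivalently
`∑_w (1+x)^{asc(w)} = A_s(x+1)`. -/
theorem h_polynomial_eq_sEulerian (n : ℕ) (s : ℕ → ℕ)
    (hs : ∀ i, 1 ≤ i → i ≤ n → 1 ≤ s i) :
    (∑ w ∈ StirlingFinset s n, ∑ A ∈ (AscFinset n w).powerset,
        (X : Polynomial ℤ) ^ A.card) = (sEulerianPoly s n).comp (X + 1) ∧
    (∑ w ∈ StirlingFinset s n, ((1 : Polynomial ℤ) + X) ^ (AscFinset n w).card) =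
      (sEulerianPoly s n).comp (X + 1) := by
  classical
  have key : (∑ w ∈ StirlingFinset s n, ((1 : Polynomial ℤ) + X) ^ (AscFinset n w).card) =
      (sEulerianPoly s n).comp (X + 1) := by
    -- ascents over Stirling perms = descents over Stirling perms, via reversal
    have hrev : (∑ w ∈ StirlingFinset s n, ((1 : Polynomial ℤ) + X) ^ (AscFinset n w).card)
        = ∑ w ∈ StirlingFinset s n, ((1 : Polynomial ℤ) + X) ^ (DescFinset n w).card := by
      refine Finset.sum_nbij' (fun w => w.reverse) (fun w => w.reverse)
        (fun w hw => mem_stirling_reverse hw) (fun w hw => mem_stirling_reverse hw)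
        (fun w _ => List.reverse_reverse w) (fun w _ => List.reverse_reverse w) ?_
      intro w _
      rw [descFinset_reverse]
    rw [hrev]
    -- now group by number of descents
    rw [sEulerianPoly, Polynomial.sum_comp]
    have : ∀ k ∈ Finset.range ((∑ i ∈ Finset.Icc 1 n, s i) + 1),
        (Polynomial.C ((((StirlingFinset s n).filter
            fun w => (DescFinset n w).card = k).card : ℤ)) * X ^ k).comp (X + 1)
        = ∑ w ∈ (StirlingFinset s n).filter (fun w => (DescFinset n w).card = k),
            ((1 : Polynomial ℤ) + X) ^ k := by
      intro k _
      rw [Finset.sum_const, Polynomial.mul_comp, Polynomial.C_comp, Polynomial.pow_comp,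
        Polynomial.X_comp, nsmul_eq_mul]
      rw [Polynomial.C_eq_natCast]
      push_cast
      ring
    rw [Finset.sum_congr rfl this]
    refine (Finset.sum_fiberwise_of_maps_to' ?_ _).symm
    intro w hw
    rw [Finset.mem_range, Nat.lt_succ_iff, ← stirling_length hw]
    exact descFinset_card_le n w
  refine ⟨?_, key⟩
  rw [← key]
  exact Finset.sum_congr rfl fun w _ => sum_powerset_pow _
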